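/- arXiv:1506.00742 — 5 statements merged into one kernel-verified Lean document; each statement's English description precedes it below -/
import Mathlib

section
/- Let K be a nonarchimedean valued field that is spherically complete (every decreasing chain of closed balls has nonempty intersection), and let τ : K → K be a ring homomorphism preserving the absolute value. If τ induces a surjection on the residue field and on the value group (i.e., every residue class contains τ of some element of the same valuation, and every value in |K^×| is attained by τ(K^×)), then τ is surjective. -/
/-- Let `K` be a nonarchimedean valued field (absolute value `v`) which is
spherically complete: every chain of closed balls (each of which is nonempty) has a common
point. If `τ : K → K` is a ring homomorphism preserving the absolute value such that for every
nonzero `x` there is `y` with `v (x - τ y) < v x` (surjectivity on residue field and value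
group), then `τ` is surjective. -/
theorem spherically_complete_endomorphism_surjective
    {K : Type*} [Field K] (v : K → ℝ)
    (hnn : ∀ x, 0 ≤ v x) (h0 : ∀ x, v x = 0 ↔ x = 0)
    (hmul : ∀ x y, v (x * y) = v x * v y)
    (hna : ∀ x y, v (x + y) ≤ max (v x) (v y))
    (hsph : ∀ (ι : Type) (a : ι → K) (r : ι → ℝ), Nonempty ι →
      (∀ i j : ι, {x : K | v (x - a i) ≤ r i} ⊆ {x : K | v (x - a j) ≤ r j} ∨
        {x : K | v (x - a j) ≤ r j} ⊆ {x : K | v (x - a i) ≤ r i}) →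
      (∀ i, ∃ x, v (x - a i) ≤ r i) →
      ∃ x : K, ∀ i, v (x - a i) ≤ r i)
    (τ : K →+* K) (hτ : ∀ x, v (τ x) = v x)
    (happrox : ∀ x : K, x ≠ 0 → ∃ y : K, v (x - τ y) < v x) :
    Function.Surjective τ := by
  classical
  -- basic facts about v
  have v1 : v (1 : K) = 1 := by
    have h := hmul 1 1
    rw [one_mul] at h
    have hne : v (1 : K) ≠ 0 := by
      simp only [Ne, h0]; exact one_ne_zero
    have := mul_left_cancel₀ hne (by rw [← h, mul_one] : v (1:K) * 1 = v (1:K) * v (1:K))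
    exact this.symm
  have vneg : ∀ x : K, v (-x) = v x := by
    intro x
    have hm1 : v (-1 : K) = 1 := by
      have h2 : v (-1 : K) * v (-1 : K) = 1 := by
        rw [← hmul]; norm_num [v1]
      rcases mul_self_eq_one_iff.mp h2 with h | h
      · exact h
      · exfalso; have := hnn (-1 : K); rw [h] at this; linarith
    calc v (-x) = v ((-1) * x) := by ring_nf
    _ = v (-1 : K) * v x := hmul _ _
    _ = v x := by rw [hm1, one_mul]
  have hnasub : ∀ a b : K, v (a - b) ≤ max (v a) (v b) := by
    intro a b
    have := hna a (-b)
    rw [vneg b] at this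
    simpa [sub_eq_add_neg] using this
  have key : ∀ a b : K, v b < v a → v (a + b) = v a := by
    intro a b hb
    have h1 : v (a + b) ≤ v a := by
      have := hna a b
      rwa [max_eq_left hb.le] at this
    refine le_antisymm h1 ?_
    have h2 : v a ≤ max (v (a + b)) (v b) := by
      have := hnasub (a + b) b
      simpa using this
    rcases le_max_iff.mp h2 with h | h
    · exact h
    · exact absurd (lt_of_le_of_lt h hb) (lt_irrefl _)
  intro z
  -- set up the family of balls
  set f : K → ℝ := fun y => v (z - τ y) with hf
  let ι : Type := Set.range f
  have hspec : ∀ i : ι, ∃ y : K, f y = i.1 := fun i => i.2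
  let a : ι → K := fun i => (hspec i).choose
  have ha : ∀ i : ι, v (z - τ (a i)) = i.1 := fun i => (hspec i).choose_spec
  let r : ι → ℝ := fun i => i.1
  have hincl : ∀ i j : ι, r i ≤ r j →
      {x : K | v (x - a i) ≤ r i} ⊆ {x : K | v (x - a j) ≤ r j} := by
    intro i j hij x hx
    simp only [Set.mem_setOf_eq] at hx ⊢
    have hcent : v (a i - a j) ≤ r j := by
      have h1 : v (a i - a j) = v ((z - τ (a j)) - (z - τ (a i))) := by
        rw [← hτ (a i - a j), map_sub]
        congr 1; ring
      rw [h1]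
      have := hnasub (z - τ (a j)) (z - τ (a i))
      rw [ha i, ha j] at this
      exact this.trans (max_le le_rfl hij)
    have : v (x - a j) = v ((x - a i) + (a i - a j)) := by congr 1; ring
    rw [this]
    exact (hna _ _).trans (max_le (hx.trans hij) hcent)
  have hchain : ∀ i j : ι, {x : K | v (x - a i) ≤ r i} ⊆ {x : K | v (x - a j) ≤ r j} ∨
      {x : K | v (x - a j) ≤ r j} ⊆ {x : K | v (x - a i) ≤ r i} := by
    intro i j
    rcases le_total (r i) (r j) with h | h
    · exact Or.inl (hincl i j h)
    · exact Or.inr (hincl j i h)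
  have hne : Nonempty ι := ⟨⟨f 0, 0, rfl⟩⟩
  have hballs : ∀ i, ∃ x, v (x - a i) ≤ r i := by
    intro i
    refine ⟨a i, ?_⟩
    have h1 : v ((a i) - a i) = 0 := by rw [(h0 _).mpr (by ring)]
    rw [h1]
    show (0:ℝ) ≤ i.1
    rw [← ha i]
    exact hnn _
  obtain ⟨x, hx⟩ := hsph ι a r hne hchain hballs
  -- key claim : x is within v (z - τ y) of every y
  have claim : ∀ y : K, v (x - y) ≤ v (z - τ y) := by
    intro y
    set i : ι := ⟨f y, y, rfl⟩ with hi
    have h1 : v (x - a i) ≤ v (z - τ y) := hx i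
    have h2 : v (a i - y) ≤ v (z - τ y) := by
      have heq : v (a i - y) = v ((z - τ y) - (z - τ (a i))) := by
        rw [← hτ (a i - y), map_sub]
        congr 1; ring
      rw [heq]
      have := hnasub (z - τ y) (z - τ (a i))
      rw [ha i] at this
      exact this.trans (max_le le_rfl le_rfl)
    have : v (x - y) = v ((x - a i) + (a i - y)) := by congr 1; ring
    rw [this]
    exact (hna _ _).trans (max_le h1 h2)
  refine ⟨x, ?_⟩
  by_contra hne'
  have hd : z - τ x ≠ 0 := fun h => hne' (by linear_combination -h)
  obtain ⟨w, hw⟩ := happrox (z - τ x) hd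
  have hvw : v (τ w) = v (z - τ x) := by
    have : τ w = (z - τ x) + (-((z - τ x) - τ w)) := by ring
    rw [this]
    exact key _ _ (by rw [vneg]; exact hw)
  have h1 : v (x - (x + w)) = v (z - τ x) := by
    have : v (x - (x + w)) = v w := by rw [show x - (x + w) = -w by ring, vneg]
    rw [this, ← hτ w, hvw]
  have h2 : v (z - τ (x + w)) < v (z - τ x) := by
    rw [map_add]
    have : z - (τ x + τ w) = (z - τ x) - τ w := by ring
    rw [this]; exact hw
  have := claim (x + w)
  rw [h1] at this
  exact absurd (this.trans_lt h2) (lt_irrefl _)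
end

section
/- Let K be a field complete with respect to a nonarchimedean absolute value, and let L/K be an extension of complete nonarchimedean fields such that the separable algebraic closure of K in L is dense in L. Then the completed module of Kähler differentials Ω̂_{L/K} vanishes; equivalently, the Kähler seminorm on Ω_{L/K} is identically zero. -/
open Polynomial in
lemma D_eq_zero_of_sep' {K L : Type*} [Field K] [Field L] [Algebra K L]
    {x : L} (hs : IsSeparable K x) :
    KaehlerDifferential.D K L x = 0 := by
  have h0 : KaehlerDifferential.D K L (aeval x (minpoly K x)) =
      aeval x (derivative (minpoly K x)) • KaehlerDifferential.D K L x :=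
    Derivation.map_aeval _ _ _
  rw [minpoly.aeval, map_zero] at h0
  have hne : aeval x (derivative (minpoly K x)) ≠ 0 :=
    hs.aeval_derivative_ne_zero (minpoly.aeval K x)
  rcases smul_eq_zero.mp h0.symm with h | h
  · exact absurd h hne
  · exact h

/-- Let `L/K` be an extension of complete nonarchimedean valued fields such
that the set of elements of `L` which are separable algebraic over `K` is dense in `L`. Then
the Kähler seminorm on `Ω_{L/K}` is identically zero (equivalently, the completed module of
Kähler differentials vanishes): every `L`-seminorm `N` on `Ω_{L/K}` making the universal
derivation nonexpanding is identically zero. -/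
theorem kaehler_seminorm_vanishes_of_separable_dense
    {K L : Type*} [Field K] [Field L] [Algebra K L]
    (vK : K → ℝ) (vL : L → ℝ)
    (hKnn : ∀ x, 0 ≤ vK x) (hK0 : ∀ x, vK x = 0 ↔ x = 0)
    (hKmul : ∀ x y, vK (x * y) = vK x * vK y)
    (hKna : ∀ x y, vK (x + y) ≤ max (vK x) (vK y))
    (hLnn : ∀ x, 0 ≤ vL x) (hL0 : ∀ x, vL x = 0 ↔ x = 0)
    (hLmul : ∀ x y, vL (x * y) = vL x * vL y)
    (hLna : ∀ x y, vL (x + y) ≤ max (vL x) (vL y))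
    (hcompat : ∀ x : K, vL (algebraMap K L x) = vK x)
    (hKcomplete : ∀ a : ℕ → K,
      (∀ ε : ℝ, 0 < ε → ∃ N, ∀ m ≥ N, ∀ n ≥ N, vK (a m - a n) < ε) →
      ∃ l : K, ∀ ε : ℝ, 0 < ε → ∃ N, ∀ n ≥ N, vK (a n - l) < ε)
    (hLcomplete : ∀ a : ℕ → L,
      (∀ ε : ℝ, 0 < ε → ∃ N, ∀ m ≥ N, ∀ n ≥ N, vL (a m - a n) < ε) →
      ∃ l : L, ∀ ε : ℝ, 0 < ε → ∃ N, ∀ n ≥ N, vL (a n - l) < ε)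
    (hdense : ∀ y : L, ∀ ε : ℝ, 0 < ε →
      ∃ x : L, IsIntegral K x ∧ IsSeparable K x ∧ vL (y - x) < ε) :
    ∀ N : KaehlerDifferential K L → ℝ,
      (∀ ω, 0 ≤ N ω) →
      (∀ ω η, N (ω + η) ≤ max (N ω) (N η)) →
      (∀ (a : L) ω, N (a • ω) = vL a * N ω) →
      (∀ x : L, N (KaehlerDifferential.D K L x) ≤ vL x) →
      ∀ ω, N ω = 0 := by
  intro N hNnn hNna hNsmul hNd
  have hN0 : N 0 = 0 := by
    have h := hNsmul 0 0
    rw [zero_smul, (hL0 0).mpr rfl, zero_mul] at h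
    exact h
  have hD : ∀ x : L, N (KaehlerDifferential.D K L x) = 0 := by
    intro x
    refine le_antisymm ?_ (hNnn _)
    by_contra h
    push_neg at h
    obtain ⟨y, _, hys, hyv⟩ := hdense x _ h
    have hDy : KaehlerDifferential.D K L y = 0 := D_eq_zero_of_sep' hys
    have heq : N (KaehlerDifferential.D K L x) =
        N (KaehlerDifferential.D K L (x - y)) := by
      rw [map_sub, hDy, sub_zero]
    have hle := hNd (x - y)
    linarith
  intro ω
  have hmem : ω ∈ Submodule.span L (Set.range (KaehlerDifferential.D K L)) := by
    rw [KaehlerDifferential.span_range_derivation]; trivial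
  induction hmem using Submodule.span_induction with
  | mem x hx => obtain ⟨y, rfl⟩ := hx; exact hD y
  | zero => exact hN0
  | add x y _ _ hx hy =>
      refine le_antisymm ?_ (hNnn _)
      calc N (x + y) ≤ max (N x) (N y) := hNna x y
        _ = 0 := by rw [hx, hy, max_self]
  | smul a x _ hx => rw [hNsmul, hx, mul_zero]
end

section
/- Let k be a complete nonarchimedean field, K the completion of the rational function field k(t_1, t_2, …) in countably many variables with respect to the Gauss norm (the norm of a nonzero polynomial is the maximum of the absolute values of its coefficients, extended multiplicatively to fractions). Let x_1, x_2, … ∈ k^× with |x_i| < 1 and lim_n |x_1⋯x_n| > 0, and suppose there is λ ∈ k^× with |λ| < |x_1⋯x_n| for all n. Let τ : K → K be the unique continuous k-algebra endomorphism with τ(t_n) = t_n − x_n t_{n+1} for all n. Then t_1 is not in the image of τ; in particular τ is a norm-preserving continuous endomorphism of K that is not surjective. -/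
/-- Let `K` be the completion of `k(t_0, t_1, …)` for the Gauss norm `w`
(extending the absolute value `v` of `k`, with `w (t n) = 1`, the rational functions in
finitely many variables dense in `K`, and the Gauss-norm coefficient bound
`v a ≤ w (a · t n + g)` for `g` a rational function in `t_0, …, t_{n-1}`). Let `x_i ∈ k^×`
with `v (x i) < 1` and suppose `λ ∈ k^×` satisfies `v λ < v (x_0 ⋯ x_{n-1})` for all `n`.
If `τ : K → K` is the norm-preserving `k`-algebra endomorphism with
`τ (t n) = t n - x n · t (n+1)`, then `t 0` is not in the image of `τ`; in particular `τ` is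
not surjective. -/
theorem gauss_norm_endomorphism_not_surjective
    {k K : Type*} [Field k] [Field K]
    (v : k → ℝ) (w : K → ℝ)
    (hvnn : ∀ x, 0 ≤ v x) (hv0 : ∀ x, v x = 0 ↔ x = 0)
    (hvmul : ∀ x y, v (x * y) = v x * v y)
    (hvna : ∀ x y, v (x + y) ≤ max (v x) (v y))
    (hwnn : ∀ x, 0 ≤ w x) (hw0 : ∀ x, w x = 0 ↔ x = 0)
    (hwmul : ∀ x y, w (x * y) = w x * w y)
    (hwna : ∀ x y, w (x + y) ≤ max (w x) (w y))
    (hcomplete : ∀ a : ℕ → K,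
      (∀ ε : ℝ, 0 < ε → ∃ N, ∀ m ≥ N, ∀ n ≥ N, w (a m - a n) < ε) →
      ∃ l : K, ∀ ε : ℝ, 0 < ε → ∃ N, ∀ n ≥ N, w (a n - l) < ε)
    (ι : k →+* K) (hι : ∀ a, w (ι a) = v a)
    (t : ℕ → K) (ht1 : ∀ n, w (t n) = 1)
    (hdense : ∀ y : K, ∀ ε : ℝ, 0 < ε → ∃ n : ℕ,
      ∃ y' ∈ Subfield.closure (Set.range ι ∪ t '' Set.Iio n), w (y - y') < ε)
    (hgauss : ∀ n : ℕ, ∀ a : k,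
      ∀ g ∈ Subfield.closure (Set.range ι ∪ t '' Set.Iio n), v a ≤ w (ι a * t n + g))
    (x : ℕ → k) (hx0 : ∀ i, x i ≠ 0) (hx1 : ∀ i, v (x i) < 1)
    (lam : k) (hlam0 : lam ≠ 0)
    (hlam : ∀ n, v lam < v (∏ i ∈ Finset.range n, x i))
    (τ : K →+* K) (hτk : ∀ a : k, τ (ι a) = ι a) (hτw : ∀ y, w (τ y) = w y)
    (hτt : ∀ n, τ (t n) = t n - ι (x n) * t (n + 1)) :
    t 0 ∉ Set.range τ := by
  rintro ⟨y, hy⟩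
  -- notation
  set c : ℕ → k := fun m => ∏ i ∈ Finset.range m, x i with hc
  have hc0 : ∀ m, c m ≠ 0 := fun m =>
    Finset.prod_ne_zero_iff.mpr fun i _ => hx0 i
  have hvpos : ∀ m, 0 < v (c m) := fun m =>
    lt_of_le_of_ne (hvnn _) fun h => hc0 m ((hv0 _).mp h.symm)
  have hvlam_pos : 0 < v lam :=
    lt_of_le_of_ne (hvnn _) fun h => hlam0 ((hv0 _).mp h.symm)
  -- basic facts about w
  have hw1 : w 1 = 1 := by
    have h := hwmul 1 1
    rw [mul_one] at h
    have h1 : w (1 : K) ≠ 0 := fun h0 => one_ne_zero ((hw0 (1 : K)).mp h0)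
    have h2 : w (1 : K) * 1 = w 1 * w 1 := by rw [mul_one]; exact h
    exact (mul_left_cancel₀ h1 h2).symm
  have hwneg : ∀ u : K, w (-u) = w u := by
    intro u
    have hm : w (-1 : K) = 1 := by
      have h := hwmul (-1 : K) (-1)
      rw [neg_mul_neg, one_mul, hw1] at h
      nlinarith [hwnn (-1 : K)]
    calc w (-u) = w ((-1) * u) := by rw [neg_one_mul]
      _ = 1 * w u := by rw [hwmul, hm]
      _ = w u := one_mul _
  -- pick a good approximation of y
  obtain ⟨n, z, hzF, hz⟩ := hdense y (v lam) hvlam_pos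
  -- the partial sums s m = ∑_{j<m} c_j t_j
  set s : ℕ → K := fun m => ∑ j ∈ Finset.range m, ι (c j) * t j with hs
  have hτs : ∀ m, τ (s m) = t 0 - ι (c m) * t m := by
    intro m
    have hstep : ∀ j, τ (ι (c j) * t j) = ι (c j) * t j - ι (c (j + 1)) * t (j + 1) := by
      intro j
      have hcj : c (j + 1) = c j * x j := Finset.prod_range_succ _ _
      rw [map_mul, hτk, hτt, hcj, map_mul]
      ring
    have : τ (s m) = ∑ j ∈ Finset.range m,
        ((fun i => ι (c i) * t i) j - (fun i => ι (c i) * t i) (j + 1)) := by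
      rw [hs, map_sum]
      exact Finset.sum_congr rfl fun j _ => hstep j
    rw [this, Finset.sum_range_sub']
    have hc0' : (c 0 : k) = 1 := Finset.prod_range_zero _
    rw [hc0', map_one, one_mul]
  -- w (y - s (n+1)) = v (c (n+1))
  have hwys : w (y - s (n + 1)) = v (c (n + 1)) := by
    rw [← hτw, map_sub, hy, hτs, sub_sub_cancel, hwmul, hι, ht1, mul_one]
  have hzlt : w (y - z) < v (c (n + 1)) := lt_trans hz (hlam (n + 1))
  -- hence w (s (n+1) - z) = v (c (n+1))
  have hkey : w (s (n + 1) - z) = v (c (n + 1)) := by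
    apply le_antisymm
    · have h1 : s (n + 1) - z = (s (n + 1) - y) + (y - z) := by ring
      have h2 : w (s (n + 1) - y) = v (c (n + 1)) := by
        rw [show s (n + 1) - y = -(y - s (n + 1)) by ring, hwneg, hwys]
      calc w (s (n + 1) - z) ≤ max (w (s (n + 1) - y)) (w (y - z)) := by
            rw [h1]; exact hwna _ _
        _ ≤ v (c (n + 1)) := max_le (le_of_eq h2) (le_of_lt hzlt)
    · by_contra hlt
      push_neg at hlt
      have h1 : y - s (n + 1) = (y - z) + (z - s (n + 1)) := by ring
      have h2 : w (z - s (n + 1)) < v (c (n + 1)) := by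
        rw [show z - s (n + 1) = -(s (n + 1) - z) by ring, hwneg]; exact hlt
      have h3 : w (y - s (n + 1)) < v (c (n + 1)) := by
        calc w (y - s (n + 1)) ≤ max (w (y - z)) (w (z - s (n + 1))) := by
              rw [h1]; exact hwna _ _
          _ < v (c (n + 1)) := max_lt hzlt h2
      exact absurd hwys (ne_of_lt h3)
  -- but the Gauss bound gives w (s (n+1) - z) ≥ v (c n) > v (c (n+1))
  have hsF : s n ∈ Subfield.closure (Set.range ι ∪ t '' Set.Iio n) := by
    apply Subfield.sum_mem
    intro j hj
    exact Subfield.mul_mem _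
      (Subfield.subset_closure (Or.inl ⟨c j, rfl⟩))
      (Subfield.subset_closure (Or.inr ⟨j, Finset.mem_range.mp hj, rfl⟩))
  have hgb : v (c n) ≤ w (s (n + 1) - z) := by
    have hsplit : s (n + 1) - z = ι (c n) * t n + (s n - z) := by
      have hsucc : s (n + 1) = s n + ι (c n) * t n := Finset.sum_range_succ _ _
      rw [hsucc]; ring
    rw [hsplit]
    exact hgauss n (c n) (s n - z) (Subfield.sub_mem _ hsF hzF)
  have hdec : v (c (n + 1)) < v (c n) := by
    have hcn1 : c (n + 1) = c n * x n := Finset.prod_range_succ _ _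
    rw [hcn1, hvmul]
    exact mul_lt_of_lt_one_right (hvpos n) (hx1 n)
  rw [hkey] at hgb
  exact absurd hgb (not_le_of_gt hdec)
end

section
/- Let K be a complete nonarchimedean field, L/K an extension of complete nonarchimedean fields, and t ∈ L such that K(t) is dense in L. Then the completed module of Kähler differentials Ω̂_{L/K} (completion of Ω_{L/K} for the Kähler seminorm) is generated as an L-module by the single element d̂(t). -/
/-- Let `L/K` be an extension of complete nonarchimedean fields and `t ∈ L`
with `K(t)` dense in `L`. Then the completed module of Kähler differentials is generated by
`d̂ t`: for every admissible seminorm `N` on `Ω_{L/K}` (`L`-seminorm making `d` nonexpanding),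
every `ω` and every `ε > 0`, there is `a ∈ L` with `N (ω - a • d t) < ε`. -/
theorem completed_kaehler_generated_by_dt
    {K L : Type*} [Field K] [Field L] [Algebra K L]
    (vK : K → ℝ) (vL : L → ℝ)
    (hKnn : ∀ x, 0 ≤ vK x) (hK0 : ∀ x, vK x = 0 ↔ x = 0)
    (hKmul : ∀ x y, vK (x * y) = vK x * vK y)
    (hKna : ∀ x y, vK (x + y) ≤ max (vK x) (vK y))
    (hLnn : ∀ x, 0 ≤ vL x) (hL0 : ∀ x, vL x = 0 ↔ x = 0)
    (hLmul : ∀ x y, vL (x * y) = vL x * vL y)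
    (hLna : ∀ x y, vL (x + y) ≤ max (vL x) (vL y))
    (hcompat : ∀ x : K, vL (algebraMap K L x) = vK x)
    (hKcomplete : ∀ a : ℕ → K,
      (∀ ε : ℝ, 0 < ε → ∃ N, ∀ m ≥ N, ∀ n ≥ N, vK (a m - a n) < ε) →
      ∃ l : K, ∀ ε : ℝ, 0 < ε → ∃ N, ∀ n ≥ N, vK (a n - l) < ε)
    (hLcomplete : ∀ a : ℕ → L,
      (∀ ε : ℝ, 0 < ε → ∃ N, ∀ m ≥ N, ∀ n ≥ N, vL (a m - a n) < ε) →
      ∃ l : L, ∀ ε : ℝ, 0 < ε → ∃ N, ∀ n ≥ N, vL (a n - l) < ε)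
    (t : L)
    (hdense : ∀ y : L, ∀ ε : ℝ, 0 < ε →
      ∃ z ∈ Subfield.closure (Set.range (algebraMap K L) ∪ {t}), vL (y - z) < ε) :
    ∀ N : KaehlerDifferential K L → ℝ,
      (∀ ω, 0 ≤ N ω) →
      (∀ ω η, N (ω + η) ≤ max (N ω) (N η)) →
      (∀ (a : L) ω, N (a • ω) = vL a * N ω) →
      (∀ x : L, N (KaehlerDifferential.D K L x) ≤ vL x) →
      ∀ ω : KaehlerDifferential K L, ∀ ε : ℝ, 0 < ε →
        ∃ a : L, N (ω - a • KaehlerDifferential.D K L t) < ε := by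

  intro N hNnn hNmax hNsmul hNd ω ε hε
  have hv0 : vL 0 = 0 := (hL0 0).mpr rfl
  have hN0 : N 0 = 0 := by
    have h := hNsmul 0 0
    rw [zero_smul, hv0, zero_mul] at h
    exact h
  -- every element of the generated subfield has derivative a multiple of D t
  have key : ∀ z ∈ Subfield.closure (Set.range (algebraMap K L) ∪ {t}),
      ∃ a : L, KaehlerDifferential.D K L z = a • KaehlerDifferential.D K L t := by
    intro z hz
    induction hz using Subfield.closure_induction with
    | mem x hx =>
      rcases hx with ⟨k, rfl⟩ | hx
      · exact ⟨0, by simp⟩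
      · rcases hx with rfl
        exact ⟨1, by simp⟩
    | one => exact ⟨0, by simp⟩
    | add x y hx hy ihx ihy =>
      obtain ⟨a, ha⟩ := ihx; obtain ⟨b, hb⟩ := ihy
      exact ⟨a + b, by simp [ha, hb, add_smul]⟩
    | neg x hx ihx =>
      obtain ⟨a, ha⟩ := ihx
      exact ⟨-a, by simp [ha]⟩
    | inv x hx ihx =>
      obtain ⟨a, ha⟩ := ihx
      refine ⟨-x⁻¹ ^ 2 * a, ?_⟩
      rw [Derivation.leibniz_inv, ha, smul_smul]
    | mul x y hx hy ihx ihy =>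
      obtain ⟨a, ha⟩ := ihx; obtain ⟨b, hb⟩ := ihy
      refine ⟨x * b + y * a, ?_⟩
      rw [Derivation.leibniz, ha, hb, smul_smul, smul_smul, add_smul]
  -- main: span induction
  have main : ∀ ω : KaehlerDifferential K L, ∀ ε : ℝ, 0 < ε →
      ∃ a : L, N (ω - a • KaehlerDifferential.D K L t) < ε := by
    have hmem : ∀ ω : KaehlerDifferential K L,
        ω ∈ Submodule.span L (Set.range (KaehlerDifferential.D K L)) := by
      intro ω
      rw [KaehlerDifferential.span_range_derivation]
      trivial
    intro ω
    induction hmem ω using Submodule.span_induction with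
    | mem ω hω =>
      obtain ⟨x, rfl⟩ := hω
      intro ε hε
      obtain ⟨z, hz, hclose⟩ := hdense x ε hε
      obtain ⟨a, ha⟩ := key z hz
      refine ⟨a, ?_⟩
      rw [← ha, ← map_sub]
      exact lt_of_le_of_lt (hNd (x - z)) hclose
    | zero =>
      intro ε hε
      refine ⟨0, ?_⟩
      rw [zero_smul, sub_zero, hN0]
      exact hε
    | add ω η hω hη ihω ihη =>
      intro ε hε
      obtain ⟨a, ha⟩ := ihω ε hε
      obtain ⟨b, hb⟩ := ihη ε hε
      refine ⟨a + b, ?_⟩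
      have : ω + η - (a + b) • KaehlerDifferential.D K L t =
          (ω - a • KaehlerDifferential.D K L t) + (η - b • KaehlerDifferential.D K L t) := by
        rw [add_smul]; abel
      rw [this]
      exact lt_of_le_of_lt (hNmax _ _) (max_lt ha hb)
    | smul c ω hω ihω =>
      intro ε hε
      by_cases hc : c = 0
      · refine ⟨0, ?_⟩
        rw [hc, zero_smul, zero_smul, sub_zero, hN0]
        exact hε
      · have hvc : 0 < vL c := lt_of_le_of_ne (hLnn c) (fun h => hc ((hL0 c).mp h.symm))
        obtain ⟨a, ha⟩ := ihω (ε / vL c) (div_pos hε hvc)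
        refine ⟨c * a, ?_⟩
        have : c • ω - (c * a) • KaehlerDifferential.D K L t =
            c • (ω - a • KaehlerDifferential.D K L t) := by
          rw [smul_sub, mul_smul]
        rw [this, hNsmul]
        calc vL c * N (ω - a • KaehlerDifferential.D K L t) < vL c * (ε / vL c) :=
              (mul_lt_mul_iff_right₀ hvc).mpr ha
          _ = ε := by field_simp
  exact main ω ε hε
end

section
/- Let L/K be an extension of complete nonarchimedean fields and let 𝒜 = L ⊗̂_K L with the tensor product norm, J = ker(𝒜 → L) the kernel of the multiplication map, and T = 1⊗t − t⊗1 for some t ∈ L. Suppose a_n ∈ K and r_n → 0 are such that |t^{p^n} − a_n| ≤ r_n^{p^n} for all n (characteristic p). Then ‖T^{p^n}‖ ≤ r_n^{p^n} for every n; in particular T is quasi-nilpotent (its spectral seminorm is 0). -/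
open Filter

/-- Let `L/K` be an extension of complete nonarchimedean fields of
characteristic `p`, `𝒜 = L ⊗̂_K L` with the tensor product (sub)norm `nA` (a nonarchimedean
submultiplicative seminorm for which both inclusions `φ, ψ : L → 𝒜` are nonexpanding and agree
on `K`), and `T = 1 ⊗ t - t ⊗ 1 = φ t - ψ t`. If `a n ∈ K` and `r n → 0` are such that
`|t^{p^n} - a n| ≤ (r n)^{p^n}` for all `n`, then `‖T^{p^n}‖ ≤ (r n)^{p^n}` for all `n`; in
particular `T` is quasi-nilpotent: its spectral seminorm `lim_m ‖T^m‖^{1/m}` is `0`. -/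
theorem tensor_T_quasi_nilpotent
    {K L A : Type*} [Field K] [Field L] [CommRing A]
    (p : ℕ) (hp : p.Prime) [CharP L p] [CharP A p]
    (vL : L → ℝ)
    (hLnn : ∀ x, 0 ≤ vL x) (hL0 : ∀ x, vL x = 0 ↔ x = 0)
    (hLmul : ∀ x y, vL (x * y) = vL x * vL y)
    (hLna : ∀ x y, vL (x + y) ≤ max (vL x) (vL y))
    (nA : A → ℝ)
    (hAnn : ∀ a, 0 ≤ nA a) (hAna : ∀ a b, nA (a + b) ≤ max (nA a) (nA b))
    (hAmul : ∀ a b, nA (a * b) ≤ nA a * nA b) (hA1 : nA 1 ≤ 1)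
    (ι : K →+* L) (φ ψ : L →+* A)
    (hφψ : ∀ a : K, φ (ι a) = ψ (ι a))
    (hφ : ∀ x, nA (φ x) ≤ vL x) (hψ : ∀ x, nA (ψ x) ≤ vL x)
    (t : L) (a : ℕ → K) (r : ℕ → ℝ) (hrnn : ∀ n, 0 ≤ r n)
    (hrlim : Tendsto r atTop (nhds 0))
    (happ : ∀ n : ℕ, vL (t ^ p ^ n - ι (a n)) ≤ r n ^ p ^ n) :
    (∀ n : ℕ, nA ((φ t - ψ t) ^ p ^ n) ≤ r n ^ p ^ n) ∧
    Tendsto (fun m : ℕ => nA ((φ t - ψ t) ^ m) ^ ((m : ℝ)⁻¹)) atTop (nhds 0) := by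
  haveI : Fact p.Prime := ⟨hp⟩
  set T : A := φ t - ψ t with hT
  -- `vL 1 = 1` and `vL (-x) = vL x`
  have hv1 : vL (1 : L) = 1 := by
    have h := hLmul 1 1
    rw [mul_one] at h
    have h10 : vL (1 : L) ≠ 0 := fun h0 => one_ne_zero ((hL0 1).mp h0)
    have h2 : vL (1 : L) * vL 1 = vL 1 * 1 := by rw [mul_one]; exact h.symm
    exact mul_left_cancel₀ h10 h2
  have hvneg : ∀ x : L, vL (-x) = vL x := by
    intro x
    have hm1 : vL (-1 : L) = 1 := by
      have h := hLmul (-1) (-1)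
      rw [neg_mul_neg, one_mul, hv1] at h
      rcases mul_self_eq_one_iff.mp h.symm with h1 | h1
      · exact h1
      · exfalso; linarith [hLnn (-1 : L), h1]
    calc vL (-x) = vL ((-1) * x) := by rw [neg_one_mul]
      _ = vL (-1) * vL x := hLmul _ _
      _ = vL x := by rw [hm1, one_mul]
  -- Part 1
  have part1 : ∀ n : ℕ, nA (T ^ p ^ n) ≤ r n ^ p ^ n := by
    intro n
    set u : L := t ^ p ^ n - ι (a n) with hu
    have hTn : T ^ p ^ n = φ u + ψ (-u) := by
      rw [hT, sub_pow_char_pow]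
      simp only [hu, map_sub, map_neg, map_pow]
      rw [hφψ (a n)]
      ring
    calc nA (T ^ p ^ n) = nA (φ u + ψ (-u)) := by rw [hTn]
      _ ≤ max (nA (φ u)) (nA (ψ (-u))) := hAna _ _
      _ ≤ max (vL u) (vL (-u)) := max_le_max (hφ u) (hψ _)
      _ = vL u := by rw [hvneg, max_self]
      _ ≤ r n ^ p ^ n := happ n
  refine ⟨part1, ?_⟩
  -- submultiplicative powers
  have hpow : ∀ (x : A) (k : ℕ), nA (x ^ k) ≤ nA x ^ k := by
    intro x k
    induction k with
    | zero => simpa using hA1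
    | succ k ih =>
      calc nA (x ^ (k + 1)) = nA (x * x ^ k) := by rw [pow_succ']
        _ ≤ nA x * nA (x ^ k) := hAmul _ _
        _ ≤ nA x * nA x ^ k := mul_le_mul_of_nonneg_left ih (hAnn x)
        _ = nA x ^ (k + 1) := (pow_succ' _ _).symm
  -- Part 2
  rw [Metric.tendsto_atTop]
  intro ε hε
  set δ : ℝ := min ε 1 / 2 with hδ
  have hδpos : 0 < δ := by positivity
  have hδlt1 : δ < 1 := by
    have : min ε 1 ≤ 1 := min_le_right _ _
    rw [hδ]; linarith
  have hδltε : δ < ε := by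
    have : min ε 1 ≤ ε := min_le_left _ _
    rw [hδ]; linarith
  obtain ⟨n, hn⟩ := (hrlim.eventually_lt_const hδpos).exists
  set N : ℕ := p ^ n with hNdef
  have hN1 : 1 ≤ N := Nat.one_le_pow _ _ hp.pos
  have hNR : (0 : ℝ) < N := by exact_mod_cast hN1
  set ρ : ℝ := δ ^ N with hρdef
  have hρpos : 0 < ρ := pow_pos hδpos N
  have hρlt1 : ρ < 1 := pow_lt_one₀ hδpos.le hδlt1 (by omega)
  have hTN : nA (T ^ N) ≤ ρ :=
    (part1 n).trans (pow_le_pow_left₀ (hrnn n) hn.le N)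
  set B : ℝ := nA T + 1 with hBdef
  have hB1 : 1 ≤ B := by have := hAnn T; rw [hBdef]; linarith
  have hBpos : 0 < B := lt_of_lt_of_le one_pos hB1
  have hTB : nA T ≤ B := by rw [hBdef]; linarith
  set C : ℝ := B ^ N with hCdef
  have hCpos : 0 < C := pow_pos hBpos N
  -- nat-power bound
  have key : ∀ m : ℕ, nA (T ^ m) ≤ ρ ^ (m / N) * C := by
    intro m
    have hmod := Nat.div_add_mod m N
    set q := m / N with hq
    set s := m % N with hs
    have hsN : s < N := Nat.mod_lt _ (by omega)
    have hsplit : T ^ m = (T ^ N) ^ q * T ^ s := by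
      rw [← pow_mul, ← pow_add, hmod]
    calc nA (T ^ m) = nA ((T ^ N) ^ q * T ^ s) := by rw [hsplit]
      _ ≤ nA ((T ^ N) ^ q) * nA (T ^ s) := hAmul _ _
      _ ≤ nA (T ^ N) ^ q * nA T ^ s :=
          mul_le_mul (hpow _ _) (hpow _ _) (hAnn _) (pow_nonneg (hAnn _) _)
      _ ≤ ρ ^ q * B ^ s :=
          mul_le_mul (pow_le_pow_left₀ (hAnn _) hTN q)
            (pow_le_pow_left₀ (hAnn _) hTB s) (pow_nonneg (hAnn _) _)
            (pow_nonneg hρpos.le _)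
      _ ≤ ρ ^ q * B ^ N :=
          mul_le_mul_of_nonneg_left (pow_le_pow_right₀ hB1 hsN.le)
            (pow_nonneg hρpos.le _)
  -- rpow bound
  have bound : ∀ m : ℕ, 1 ≤ m →
      nA (T ^ m) ^ ((m : ℝ)⁻¹) ≤
        ρ ^ ((N : ℝ)⁻¹ - (m : ℝ)⁻¹) * C ^ ((m : ℝ)⁻¹) := by
    intro m hm
    have hmR : (0 : ℝ) < m := by exact_mod_cast hm
    set q := m / N with hq
    have h1 : nA (T ^ m) ^ ((m : ℝ)⁻¹) ≤ (ρ ^ q * C) ^ ((m : ℝ)⁻¹) :=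
      Real.rpow_le_rpow (hAnn _) (key m) (inv_nonneg.mpr hmR.le)
    have h2 : (ρ ^ q * C : ℝ) ^ ((m : ℝ)⁻¹)
        = ρ ^ ((q : ℝ) * (m : ℝ)⁻¹) * C ^ ((m : ℝ)⁻¹) := by
      rw [Real.mul_rpow (pow_nonneg hρpos.le _) hCpos.le,
        ← Real.rpow_natCast ρ q, ← Real.rpow_mul hρpos.le]
    have hmq : (m : ℝ) ≤ N * ((q : ℝ) + 1) := by
      have h1 : N * q + m % N = m := by rw [hq]; exact Nat.div_add_mod m N
      have h2 : m % N < N := Nat.mod_lt m (by omega)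
      have hmN : m ≤ N * q + N := by omega
      have h3 : (m : ℝ) ≤ (N : ℝ) * q + N := by exact_mod_cast hmN
      have h4 : (N : ℝ) * ((q : ℝ) + 1) = (N : ℝ) * q + N := by ring
      linarith
    have hexp : (N : ℝ)⁻¹ - (m : ℝ)⁻¹ ≤ (q : ℝ) * (m : ℝ)⁻¹ := by
      have h1 : (N : ℝ)⁻¹ ≤ ((q : ℝ) + 1) * (m : ℝ)⁻¹ := by
        rw [← div_eq_mul_inv, inv_eq_one_div, div_le_div_iff₀ hNR hmR]
        nlinarith [hmq]
      have h2 : ((q : ℝ) + 1) * (m : ℝ)⁻¹ = (q : ℝ) * (m : ℝ)⁻¹ + (m : ℝ)⁻¹ := by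
        ring
      linarith
    have h3 : ρ ^ ((q : ℝ) * (m : ℝ)⁻¹) ≤ ρ ^ ((N : ℝ)⁻¹ - (m : ℝ)⁻¹) :=
      Real.rpow_le_rpow_of_exponent_ge hρpos hρlt1.le hexp
    calc nA (T ^ m) ^ ((m : ℝ)⁻¹) ≤ (ρ ^ q * C) ^ ((m : ℝ)⁻¹) := h1
      _ = ρ ^ ((q : ℝ) * (m : ℝ)⁻¹) * C ^ ((m : ℝ)⁻¹) := h2
      _ ≤ ρ ^ ((N : ℝ)⁻¹ - (m : ℝ)⁻¹) * C ^ ((m : ℝ)⁻¹) :=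
          mul_le_mul_of_nonneg_right h3 (Real.rpow_nonneg hCpos.le _)
  -- the bound tends to δ
  have hinv : Tendsto (fun m : ℕ => (m : ℝ)⁻¹) atTop (nhds 0) :=
    tendsto_inv_atTop_nhds_zero_nat
  have hlim1 : Tendsto (fun m : ℕ => ρ ^ ((N : ℝ)⁻¹ - (m : ℝ)⁻¹)) atTop
      (nhds (ρ ^ ((N : ℝ)⁻¹))) := by
    have hcont := Real.continuousAt_const_rpow (a := ρ) (b := (N : ℝ)⁻¹) hρpos.ne'
    have htend : Tendsto (fun m : ℕ => (N : ℝ)⁻¹ - (m : ℝ)⁻¹) atTop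
        (nhds ((N : ℝ)⁻¹)) := by
      simpa using (tendsto_const_nhds (x := (N : ℝ)⁻¹)).sub hinv
    exact hcont.tendsto.comp htend
  have hlim2 : Tendsto (fun m : ℕ => C ^ ((m : ℝ)⁻¹)) atTop (nhds 1) := by
    have hcont := Real.continuousAt_const_rpow (a := C) (b := (0 : ℝ)) hCpos.ne'
    have := hcont.tendsto.comp hinv
    simpa [Real.rpow_zero, Function.comp_def] using this
  have hρN : ρ ^ ((N : ℝ)⁻¹) = δ := by
    rw [hρdef, ← Real.rpow_natCast δ N, ← Real.rpow_mul hδpos.le,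
      mul_inv_cancel₀ hNR.ne', Real.rpow_one]
  have hglim : Tendsto
      (fun m : ℕ => ρ ^ ((N : ℝ)⁻¹ - (m : ℝ)⁻¹) * C ^ ((m : ℝ)⁻¹)) atTop
      (nhds δ) := by
    have := hlim1.mul hlim2
    rwa [hρN, mul_one] at this
  have hev : ∀ᶠ m : ℕ in atTop,
      ρ ^ ((N : ℝ)⁻¹ - (m : ℝ)⁻¹) * C ^ ((m : ℝ)⁻¹) < ε :=
    hglim.eventually_lt_const hδltε
  obtain ⟨M, hM⟩ := eventually_atTop.mp (hev.and (eventually_ge_atTop 1))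
  refine ⟨M, fun m hm => ?_⟩
  obtain ⟨h1, h2⟩ := hM m hm
  rw [Real.dist_eq, sub_zero, abs_of_nonneg (Real.rpow_nonneg (hAnn _) _)]
  exact lt_of_le_of_lt (bound m h2) h1
end
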